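/- Every monotone polytope P ⊆ ℝ^n that is a simplex (i.e., has exactly n + 1 vertices) is GL(n,ℤ)-equivalent to the monotone simplex Δ = {x ∈ ℝ^n : x_i ≥ −1 for all i and Σ_i x_i ≤ 1}; that is, there exists A ∈ GL(n,ℤ) with A(P) = Δ. -/

import Mathlib

open Finset

/-- Real dot product of an integer vector with a real vector. -/
def dotZ {n : ℕ} (u : Fin n → ℤ) (x : Fin n → ℝ) : ℝ := ∑ i, (u i : ℝ) * x i

/-- Real dot product. -/
def dotR {n : ℕ} (u x : Fin n → ℝ) : ℝ := ∑ i, u i * x i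

/-- A point of `ℝ^n` is a lattice point if all its coordinates are integers. -/
def IsLatticePt {n : ℕ} (x : Fin n → ℝ) : Prop := ∀ i, ∃ m : ℤ, x i = (m : ℝ)

/-- A (full-dimensional) lattice polytope: the convex hull of a finite set of
lattice points whose affine span is all of `ℝ^n`. -/
def IsLatticePolytope {n : ℕ} (P : Set (Fin n → ℝ)) : Prop :=
  ∃ V : Finset (Fin n → ℝ), (∀ v ∈ V, IsLatticePt v) ∧
    P = convexHull ℝ (V : Set (Fin n → ℝ)) ∧ affineSpan ℝ P = ⊤

/-- `F` is an (exposed) face of `P`: the set of maximizers over `P` of some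
linear functional. -/
def IsFaceOf {n : ℕ} (P F : Set (Fin n → ℝ)) : Prop :=
  ∃ u : Fin n → ℝ, F = {x ∈ P | ∀ y ∈ P, dotR u y ≤ dotR u x}

/-- The dimension of a subset of `ℝ^n` (dimension of its affine hull). -/
noncomputable def dimSet {n : ℕ} (F : Set (Fin n → ℝ)) : ℕ :=
  Module.finrank ℝ (vectorSpan ℝ F)

/-- A facet of `P`: a nonempty face of dimension `n - 1`. -/
def IsFacetOf {n : ℕ} (P F : Set (Fin n → ℝ)) : Prop :=
  IsFaceOf P F ∧ F.Nonempty ∧ dimSet F + 1 = n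

/-- A vertex of `P`: a point such that `{v}` is a face. -/
def IsVertexOf {n : ℕ} (P : Set (Fin n → ℝ)) (v : Fin n → ℝ) : Prop :=
  IsFaceOf P {v}

/-- An edge of `P`: a face which is a nondegenerate segment. -/
def IsEdgeOf {n : ℕ} (P E : Set (Fin n → ℝ)) : Prop :=
  IsFaceOf P E ∧ ∃ a b : Fin n → ℝ, a ≠ b ∧ E = segment ℝ a b

/-- An integer vector is primitive if the gcd of its coordinates is 1. -/
def IsPrimitiveZ {n : ℕ} (u : Fin n → ℤ) : Prop := Finset.univ.gcd u = 1

/-- `u` is the primitive outer normal of the facet `F` of `P`. -/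
def IsFacetNormal {n : ℕ} (P F : Set (Fin n → ℝ)) (u : Fin n → ℤ) : Prop :=
  IsPrimitiveZ u ∧ IsFacetOf P F ∧
    F = {x ∈ P | ∀ y ∈ P, dotZ u y ≤ dotZ u x}

/-- `u` is the central normal vector of the face `G` of `P`: the sum of the
primitive outer normals of all the facets of `P` containing `G`. -/
def IsCentralNormal {n : ℕ} (P G : Set (Fin n → ℝ)) (u : Fin n → ℤ) : Prop :=
  ∃ (m : ℕ) (Fs : Fin m → Set (Fin n → ℝ)) (us : Fin m → Fin n → ℤ),
    Function.Injective Fs ∧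
    (∀ i, G ⊆ Fs i ∧ IsFacetNormal P (Fs i) (us i)) ∧
    (∀ F, IsFacetOf P F → G ⊆ F → ∃ i, F = Fs i) ∧
    u = ∑ i, us i

/-- The lattice length of the segment from `a` to `b`. -/
def LatticeLength {n : ℕ} (a b : Fin n → ℝ) (ℓ : ℕ) : Prop :=
  ∃ d : Fin n → ℤ, IsPrimitiveZ d ∧ ∀ i, b i - a i = (ℓ : ℝ) * (d i : ℝ)

/-- `d` is the primitive integer direction vector of the edge `E` at its
endpoint `v`, pointing away from `v`. -/
def EdgeDirAt {n : ℕ} (v : Fin n → ℝ) (E : Set (Fin n → ℝ)) (d : Fin n → ℤ) : Prop :=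
  IsPrimitiveZ d ∧ ∃ w ∈ E, ∃ t : ℝ, 0 < t ∧ ∀ i, w i - v i = t * (d i : ℝ)

/-- A polytope is smooth (Delzant) if every vertex lies in exactly `n` facets
and the primitive direction vectors of the `n` edges incident to each vertex
form a basis of the lattice `ℤ^n`. -/
def IsSmoothPolytope {n : ℕ} (P : Set (Fin n → ℝ)) : Prop :=
  ∀ v : Fin n → ℝ, IsVertexOf P v →
    (∃ Fs : Fin n → Set (Fin n → ℝ), Function.Injective Fs ∧
      (∀ i, IsFacetOf P (Fs i) ∧ v ∈ Fs i) ∧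
      (∀ F, IsFacetOf P F → v ∈ F → ∃ i, F = Fs i)) ∧
    (∃ (E : Fin n → Set (Fin n → ℝ)) (d : Fin n → Fin n → ℤ),
      Function.Injective E ∧
      (∀ i, IsEdgeOf P (E i) ∧ v ∈ E i ∧ EdgeDirAt v (E i) (d i)) ∧
      (∀ E', IsEdgeOf P E' → v ∈ E' → ∃ i, E' = E i) ∧
      IsUnit (Matrix.det (Matrix.of d)))

/-- A polytope is reflexive if the origin is in its interior and every facet is
supported at value `1` by its primitive outer normal. -/
def IsReflexivePolytope {n : ℕ} (P : Set (Fin n → ℝ)) : Prop :=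
  (0 : Fin n → ℝ) ∈ interior P ∧
  ∀ F u, IsFacetNormal P F u → ∀ x ∈ F, dotZ u x = 1

/-- A monotone polytope (= smooth reflexive polytope). -/
def IsMonotonePolytope {n : ℕ} (P : Set (Fin n → ℝ)) : Prop :=
  IsLatticePolytope P ∧ IsSmoothPolytope P ∧ IsReflexivePolytope P

/-- `F` is a nonempty face of `P` of codimension `k`. -/
def HasCodim {n : ℕ} (P F : Set (Fin n → ℝ)) (k : ℕ) : Prop :=
  IsFaceOf P F ∧ F.Nonempty ∧ dimSet F + k = n

/-- The monotone blow-up `P ∩ {x : u·x ≤ 1}` of a monotone polytope at a face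
with central normal `u`. -/
def blowupSet {n : ℕ} (P : Set (Fin n → ℝ)) (u : Fin n → ℤ) : Set (Fin n → ℝ) :=
  {x ∈ P | dotZ u x ≤ 1}

/-- The region removed from `P` by the monotone blow-up with central normal `u`. -/
def removedRegion {n : ℕ} (P : Set (Fin n → ℝ)) (u : Fin n → ℤ) : Set (Fin n → ℝ) :=
  {x ∈ P | 1 < dotZ u x}

/-- `P` admits a monotone blow-up at its face `F` with central normal `u`:
every vertex of `P` not in `F` satisfies `u·v ≤ 0`, and the blow-up is again a
monotone polytope. -/
def AdmitsMonotoneBlowup {n : ℕ} (P F : Set (Fin n → ℝ)) (u : Fin n → ℤ) : Prop :=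
  IsCentralNormal P F u ∧
  (∀ v, IsVertexOf P v → v ∉ F → dotZ u v ≤ 0) ∧
  IsMonotonePolytope (blowupSet P u)

/-- The monotone simplex `{x : x i ≥ -1 ∀ i, ∑ x i ≤ 1}` in `ℝ^n`. -/
def monotoneSimplex (n : ℕ) : Set (Fin n → ℝ) :=
  {x | (∀ i, -1 ≤ x i) ∧ ∑ i, x i ≤ 1}

/-- `AGL(n,ℤ)`-equivalence of subsets of `ℝ^n`: some map `x ↦ Ax + t` with
`A ∈ GL(n,ℤ)` and `t ∈ ℤ^n` maps `P` onto `Q`. -/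
def AGLEquiv {n : ℕ} (P Q : Set (Fin n → ℝ)) : Prop :=
  ∃ (A : Matrix (Fin n) (Fin n) ℤ) (t : Fin n → ℤ), IsUnit A.det ∧
    (fun x : Fin n → ℝ => fun i => (∑ j, (A i j : ℝ) * x j) + (t i : ℝ)) '' P = Q

section Aux
open Finset

variable {n : ℕ}

lemma dotZ_eq_dotR (u : Fin n → ℤ) (x : Fin n → ℝ) :
    dotZ u x = dotR (fun i => (u i : ℝ)) x := rfl

lemma dotR_isLinear (u : Fin n → ℝ) : IsLinearMap ℝ (dotR u) := by
  constructor
  · intro x y; simp [dotR, mul_add, Finset.sum_add_distrib]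
  · intro c x; simp [dotR, Finset.mul_sum, mul_left_comm]

/-- dot of integer vectors -/
def dotI (u v : Fin n → ℤ) : ℤ := ∑ i, u i * v i

lemma dotZ_add (u v : Fin n → ℤ) (x : Fin n → ℝ) :
    dotZ (u + v) x = dotZ u x + dotZ v x := by
  simp [dotZ, add_mul, Finset.sum_add_distrib]

lemma dotZ_neg (u : Fin n → ℤ) (x : Fin n → ℝ) :
    dotZ (fun i => -(u i)) x = -dotZ u x := by
  simp [dotZ, Finset.sum_neg_distrib]

lemma dotZ_sum {m : ℕ} (u : Fin m → Fin n → ℤ) (x : Fin n → ℝ) :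
    dotZ (∑ a, u a) x = ∑ a, dotZ (u a) x := by
  simp only [dotZ, Finset.sum_apply]
  push_cast
  simp only [Finset.sum_mul]
  exact Finset.sum_comm

lemma dotZ_shift (u z : Fin n → ℤ) (x y : Fin n → ℝ) (g : ℤ)
    (h : ∀ m, y m = x m + (g : ℝ) * (z m : ℝ)) :
    dotZ u y = dotZ u x + (g : ℝ) * (dotI u z : ℤ) := by
  simp only [dotZ, dotI]
  push_cast
  rw [Finset.mul_sum, ← Finset.sum_add_distrib]
  congr 1; ext i
  rw [h i]; ring

lemma dotZ_single (u : Fin n → ℤ) (m : Fin n) :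
    dotZ u (fun i => if i = m then (1:ℝ) else 0) = (u m : ℝ) := by
  simp [dotZ]

lemma dotZ_subvec (u : Fin n → ℤ) (x y : Fin n → ℝ) :
    dotZ u (x - y) = dotZ u x - dotZ u y := by
  simp [dotZ, mul_sub, Finset.sum_sub_distrib]

lemma dotZ_mulvec (c : ℤ) (u : Fin n → ℤ) (x : Fin n → ℝ) :
    dotZ (fun m => c * u m) x = (c : ℝ) * dotZ u x := by
  simp only [dotZ, Finset.mul_sum]
  refine Finset.sum_congr rfl fun m _ => ?_
  push_cast
  ring

lemma dotZ_subZ (u v : Fin n → ℤ) (x : Fin n → ℝ) :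
    dotZ (fun m => u m - v m) x = dotZ u x - dotZ v x := by
  simp only [dotZ, ← Finset.sum_sub_distrib]
  refine Finset.sum_congr rfl fun m _ => ?_
  push_cast
  ring

/-- gcd of an integer vector -/
def gcdZ (z : Fin n → ℤ) : ℤ := Finset.univ.gcd z

lemma gcdZ_nonneg (z : Fin n → ℤ) : 0 ≤ gcdZ z := by
  have hn := Finset.normalize_gcd (s := (Finset.univ : Finset (Fin n))) (f := z)
  rcases le_or_gt 0 (Finset.univ.gcd z) with h | h
  · exact h
  · exfalso
    rw [Int.normalize_of_nonpos h.le] at hn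
    omega

lemma gcdZ_eq_zero_iff (z : Fin n → ℤ) [NeZero n] : gcdZ z = 0 ↔ z = 0 := by
  rw [gcdZ, Finset.gcd_eq_zero_iff]
  constructor
  · intro h; funext i; exact h i (Finset.mem_univ i)
  · intro h i _; rw [h]; rfl

lemma gcdZ_smul (g : ℤ) (z : Fin n → ℤ) (hg : 0 ≤ g) :
    gcdZ (fun i => g * z i) = g * gcdZ z := by
  rw [gcdZ, Finset.gcd_mul_left, Int.normalize_of_nonneg hg]; rfl

lemma gcdZ_neg (z : Fin n → ℤ) : gcdZ (fun i => -(z i)) = gcdZ z := by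
  have : (fun i => -(z i)) = (fun i => (-1 : ℤ) * z i) := by funext i; ring
  rw [this, gcdZ, Finset.gcd_mul_left]
  have h1 : normalize (-1 : ℤ) = 1 := by
    rw [Int.normalize_of_nonpos (by norm_num)]; norm_num
  rw [h1, one_mul]; rfl

/-- primitive direction of a nonzero integer vector -/
lemma exists_primDir [NeZero n] (z : Fin n → ℤ) (hz : z ≠ 0) :
    ∃ (g : ℤ) (dvec : Fin n → ℤ), 0 < g ∧ IsPrimitiveZ dvec ∧ ∀ i, z i = g * dvec i := by
  set g := gcdZ z with hgdef
  have hg0 : g ≠ 0 := by rw [hgdef, Ne, gcdZ_eq_zero_iff]; exact hz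
  have hgpos : 0 < g := lt_of_le_of_ne (gcdZ_nonneg z) (Ne.symm hg0)
  refine ⟨g, fun i => z i / g, hgpos, ?_, ?_⟩
  · have hdvd : ∀ i, g ∣ z i := fun i => Finset.gcd_dvd (Finset.mem_univ i)
    have hmul : ∀ i, z i = g * (z i / g) := fun i => (Int.mul_ediv_cancel' (hdvd i)).symm
    have : gcdZ (fun i => g * (z i / g)) = g * gcdZ (fun i => z i / g) :=
      gcdZ_smul g _ hgpos.le
    have h2 : gcdZ z = g * gcdZ (fun i => z i / g) := by
      rw [← this]; congr 1; funext i; exact hmul i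
    rw [← hgdef] at h2
    have := mul_left_cancel₀ hg0 (by linarith [h2] : g * 1 = g * gcdZ (fun i => z i / g))
    exact this.symm
  · intro i; exact (Int.mul_ediv_cancel' (Finset.gcd_dvd (Finset.mem_univ i))).symm

lemma primitive_ne_zero [NeZero n] {u : Fin n → ℤ} (h : IsPrimitiveZ u) : u ≠ 0 := by
  intro h0
  have : gcdZ u = 0 := (gcdZ_eq_zero_iff u).mpr h0
  rw [IsPrimitiveZ] at h
  rw [gcdZ] at this; omega

/-- two primitive vectors that are positively proportional over ℝ are equal -/
lemma primitive_unique [NeZero n] {u v : Fin n → ℤ} (hu : IsPrimitiveZ u) (hv : IsPrimitiveZ v)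
    (r : ℝ) (hr : 0 < r) (h : ∀ i, (u i : ℝ) = r * (v i : ℝ)) : u = v := by
  have hvne : v ≠ 0 := primitive_ne_zero hv
  obtain ⟨i₀, hi₀⟩ : ∃ i, v i ≠ 0 := by
    by_contra hc; push_neg at hc; exact hvne (funext hc)
  -- u i * v i₀ = v i * u i₀ for all i
  have key : ∀ i, u i * v i₀ = v i * u i₀ := by
    intro i
    have : (u i : ℝ) * (v i₀ : ℝ) = (v i : ℝ) * (u i₀ : ℝ) := by
      rw [h i, h i₀]; ring
    exact_mod_cast this
  set p := u i₀; set q := v i₀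
  have hq : q ≠ 0 := hi₀
  have hsmul : (fun i => q * u i) = (fun i => p * v i) := by
    funext i; have hk := key i; linear_combination hk
  have habs : |q| * gcdZ u = |p| * gcdZ v := by
    have h1 : gcdZ (fun i => q * u i) = |q| * gcdZ u := by
      rcases le_or_gt 0 q with hq' | hq'
      · rw [abs_of_nonneg hq', gcdZ_smul _ _ hq']
      · rw [abs_of_neg hq']
        have : (fun i => q * u i) = (fun i => -((-q) * u i)) := by funext i; ring
        rw [this, gcdZ_neg, gcdZ_smul _ _ (by omega)]
    have h2 : gcdZ (fun i => p * v i) = |p| * gcdZ v := by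
      rcases le_or_gt 0 p with hp' | hp'
      · rw [abs_of_nonneg hp', gcdZ_smul _ _ hp']
      · rw [abs_of_neg hp']
        have : (fun i => p * v i) = (fun i => -((-p) * v i)) := by funext i; ring
        rw [this, gcdZ_neg, gcdZ_smul _ _ (by omega)]
    rw [← h1, ← h2, hsmul]
  rw [show gcdZ u = 1 from hu, show gcdZ v = 1 from hv, mul_one, mul_one] at habs
  have habs2 : p = q ∨ p = -q := abs_eq_abs.mp habs.symm
  have hreal : (p : ℝ) = r * (q : ℝ) := h i₀
  have hqR : (q : ℝ) ≠ 0 := Int.cast_ne_zero.mpr hq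
  have hpq : p = q := by
    rcases habs2 with h1 | h1
    · exact h1
    · exfalso
      have h2 : ((-q : ℤ) : ℝ) = r * q := by rw [← h1]; exact hreal
      push_cast at h2
      have h3 : (r + 1) * (q : ℝ) = 0 := by linarith
      rcases mul_eq_zero.mp h3 with h4 | h4
      · linarith
      · exact hqR h4
  rw [hpq] at hsmul
  funext i
  have := congrFun hsmul i
  exact mul_left_cancel₀ hq this

end Aux
section Aux2
open Finset

variable {n : ℕ}

/-- The set of maximizers of a linear functional over the hull of a finite set
is the hull of the maximizing points. -/
lemma maximizer_hull (V : Finset (Fin n → ℝ)) (u : Fin n → ℝ) (c : ℝ)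
    (S : Finset (Fin n → ℝ)) (hSV : S ⊆ V) (hSne : S.Nonempty)
    (heq : ∀ v ∈ S, dotR u v = c) (hlt : ∀ v ∈ V, v ∉ S → dotR u v < c) :
    {x ∈ convexHull ℝ (V : Set (Fin n → ℝ)) |
      ∀ y ∈ convexHull ℝ (V : Set (Fin n → ℝ)), dotR u y ≤ dotR u x}
      = convexHull ℝ (S : Set (Fin n → ℝ)) := by
  have hlin := dotR_isLinear u
  have hle : ∀ x ∈ convexHull ℝ (V : Set (Fin n → ℝ)), dotR u x ≤ c := by
    intro x hx
    refine convexHull_min ?_ (convex_halfSpace_le hlin c) hx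
    intro v hv
    rcases Finset.decidableMem v S with h | h
    · exact le_of_lt (hlt v hv h)
    · exact le_of_eq (heq v h)
  obtain ⟨s₀, hs₀⟩ := hSne
  have hs₀V : s₀ ∈ convexHull ℝ (V : Set (Fin n → ℝ)) :=
    subset_convexHull ℝ _ (hSV hs₀)
  have hs₀c : dotR u s₀ = c := heq s₀ hs₀
  ext x
  simp only [Set.mem_setOf_eq]
  constructor
  · rintro ⟨hxV, hmax⟩
    have hxc : dotR u x = c := by
      have h1 := hmax s₀ hs₀V
      have h2 := hle x hxV
      linarith [hs₀c ▸ h1]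
    -- write x as a convex combination over V
    rw [Finset.convexHull_eq] at hxV
    obtain ⟨w, hw0, hw1, hwx⟩ := hxV
    rw [Finset.centerMass_eq_of_sum_1 _ _ hw1] at hwx
    -- all weight is on S
    have hzero : ∀ v ∈ V, v ∉ S → w v = 0 := by
      have hsum : ∑ v ∈ V, w v * (c - dotR u v) = 0 := by
        have : dotR u x = ∑ v ∈ V, w v * dotR u v := by
          rw [← hwx]
          have hL : dotR u (∑ i ∈ V, w i • id i)
              = (IsLinearMap.mk' (dotR u) hlin) (∑ i ∈ V, w i • id i) := rfl
          rw [hL, map_sum]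
          refine Finset.sum_congr rfl fun v _ => ?_
          rw [map_smul, smul_eq_mul]
          rfl
        have hsum2 : ∑ v ∈ V, w v * (c - dotR u v)
            = c * ∑ v ∈ V, w v - ∑ v ∈ V, w v * dotR u v := by
          rw [Finset.mul_sum, ← Finset.sum_sub_distrib]
          congr 1; ext v; ring
        rw [hsum2, hw1, ← this, hxc]; ring
      intro v hv hvS
      have hnn : ∀ y ∈ V, 0 ≤ w y * (c - dotR u y) := by
        intro y hy
        apply mul_nonneg (hw0 y hy)
        rcases Finset.decidableMem y S with h | h
        · linarith [hlt y hy h]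
        · linarith [heq y h]
      have := (Finset.sum_eq_zero_iff_of_nonneg hnn).mp hsum v hv
      have hpos : 0 < c - dotR u v := by linarith [hlt v hv hvS]
      rcases mul_eq_zero.mp this with h | h
      · exact h
      · linarith
    -- so x is a combination over S
    have hx_sum : x = ∑ v ∈ S, w v • v := by
      rw [← hwx]
      rw [Finset.sum_subset hSV]
      · simp
      · intro v hv hvS
        rw [hzero v hv hvS, zero_smul]
    have hS_sum : ∑ v ∈ S, w v = 1 := by
      rw [← hw1, Finset.sum_subset hSV]
      intro v hv hvS
      exact hzero v hv hvS
    rw [Finset.convexHull_eq]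
    exact ⟨w, fun y hy => hw0 y (hSV hy), hS_sum, by
      rw [Finset.centerMass_eq_of_sum_1 _ _ hS_sum]
      simpa [id] using hx_sum.symm⟩
  · intro hxS
    have hxV : x ∈ convexHull ℝ (V : Set (Fin n → ℝ)) :=
      convexHull_mono (by exact_mod_cast hSV) hxS
    have hxc : dotR u x = c := by
      have : x ∈ {y | dotR u y = c} := by
        refine convexHull_min ?_ (convex_hyperplane hlin c) hxS
        intro v hv; exact heq v hv
      exact this
    exact ⟨hxV, fun y hy => by rw [hxc]; exact hle y hy⟩

/-- vertices give strictly maximizing functionals -/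
lemma vertex_strict {P : Set (Fin n → ℝ)} {v : Fin n → ℝ} (h : IsVertexOf P v) :
    v ∈ P ∧ ∃ u : Fin n → ℝ, (∀ y ∈ P, dotR u y ≤ dotR u v) ∧
      (∀ y ∈ P, dotR u y = dotR u v → y = v) := by
  obtain ⟨u, hu⟩ := h
  have hv : v ∈ {x ∈ P | ∀ y ∈ P, dotR u y ≤ dotR u x} := by
    rw [← hu]; rfl
  obtain ⟨hvP, hvmax⟩ := hv
  refine ⟨hvP, u, hvmax, ?_⟩
  intro y hyP hyeq
  have : y ∈ {x ∈ P | ∀ z ∈ P, dotR u z ≤ dotR u x} :=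
    ⟨hyP, fun z hz => hyeq ▸ hvmax z hz⟩
  rw [← hu] at this
  exact this

end Aux2
section Aux3
open Finset

variable {n : ℕ}

lemma dotR_combo (u x y : Fin n → ℝ) (a b : ℝ) :
    dotR u (a • x + b • y) = a * dotR u x + b * dotR u y := by
  simp [dotR, mul_add, Finset.sum_add_distrib, Finset.mul_sum, mul_left_comm]

/-- A monotone polytope equals the convex hull of its vertex set, which consists
of lattice points. -/
lemma hull_eq_vertices (P : Set (Fin n → ℝ)) (V' : Finset (Fin n → ℝ))
    (hhull : P = convexHull ℝ (V' : Set (Fin n → ℝ)))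
    (V : Finset (Fin n → ℝ)) (hV : ∀ v, IsVertexOf P v ↔ v ∈ V) :
    P = convexHull ℝ (V : Set (Fin n → ℝ)) ∧ (V : Set (Fin n → ℝ)) ⊆ (V' : Set (Fin n → ℝ)) := by
  classical
  have hconvP : Convex ℝ P := by rw [hhull]; exact convex_convexHull ℝ _
  have hV'P : (V' : Set (Fin n → ℝ)) ⊆ P := by rw [hhull]; exact subset_convexHull ℝ _
  have hVP : (V : Set (Fin n → ℝ)) ⊆ P := by
    intro v hv; exact (vertex_strict ((hV v).mpr hv)).1
  -- vertices are extreme points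
  have hV_ext : (V : Set (Fin n → ℝ)) ⊆ Set.extremePoints ℝ P := by
    intro v hv
    obtain ⟨hvP, u, hmax, hstrict⟩ := vertex_strict ((hV v).mpr hv)
    rw [mem_extremePoints]
    refine ⟨hvP, fun x₁ hx₁ x₂ hx₂ hseg => ?_⟩
    obtain ⟨a, b, ha, hb, hab, habv⟩ := hseg
    have hv_comb : dotR u v = a * dotR u x₁ + b * dotR u x₂ := by
      rw [← habv, dotR_combo]
    have h1 : dotR u x₁ = dotR u v := by
      by_contra hne
      have h1' : dotR u x₁ < dotR u v := lt_of_le_of_ne (hmax x₁ hx₁) hne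
      have h2' : dotR u x₂ ≤ dotR u v := hmax x₂ hx₂
      have h3 : a * dotR u v + b * dotR u v = dotR u v := by
        rw [← add_mul, hab, one_mul]
      nlinarith [mul_lt_mul_of_pos_left h1' ha, mul_le_mul_of_nonneg_left h2' hb.le]
    have h2 : dotR u x₂ = dotR u v := by
      by_contra hne
      have h2' : dotR u x₂ < dotR u v := lt_of_le_of_ne (hmax x₂ hx₂) hne
      have h3 : a * dotR u v + b * dotR u v = dotR u v := by
        rw [← add_mul, hab, one_mul]
      nlinarith [mul_lt_mul_of_pos_left h2' hb, mul_le_mul_of_nonneg_left (hmax x₁ hx₁) ha.le]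
    exact ⟨hstrict x₁ hx₁ h1, hstrict x₂ hx₂ h2⟩
  -- extreme points are vertices
  have hext_V : Set.extremePoints ℝ P ⊆ (V : Set (Fin n → ℝ)) := by
    intro x hx
    have hxP : x ∈ P := hx.1
    have hxV' : x ∈ V' := by
      have : x ∈ Set.extremePoints ℝ (convexHull ℝ (V' : Set (Fin n → ℝ))) := by
        rwa [hhull] at hx
      exact extremePoints_convexHull_subset this
    have hxdiff : x ∉ convexHull ℝ (P \ {x}) :=
      ((hconvP.mem_extremePoints_iff_mem_diff_convexHull_diff).mp hx).2
    set K := convexHull ℝ ((V'.erase x : Finset (Fin n → ℝ)) : Set (Fin n → ℝ)) with hK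
    have hxK : x ∉ K := by
      intro hmem
      apply hxdiff
      refine convexHull_mono ?_ hmem
      intro y hy
      rw [Finset.coe_erase] at hy
      exact ⟨hV'P hy.1, hy.2⟩
    have hKconv : Convex ℝ K := convex_convexHull ℝ _
    have hKclosed : IsClosed K := (V'.erase x).finite_toSet.isClosed_convexHull ℝ
    obtain ⟨f, c', hfK, hfx⟩ := geometric_hahn_banach_closed_point hKconv hKclosed hxK
    set uvec : Fin n → ℝ := fun i => f (fun j => if i = j then 1 else 0) with huvec
    have hfdot : ∀ y : Fin n → ℝ, f y = dotR uvec y := by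
      intro y
      conv_lhs => rw [pi_eq_sum_univ y]
      rw [map_sum]
      rw [dotR]
      refine Finset.sum_congr rfl fun i _ => ?_
      rw [map_smul, smul_eq_mul, mul_comm]
    -- x is the unique maximizer of uvec over P
    have hkey : ∀ y ∈ P, dotR uvec y ≤ dotR uvec x ∧ (dotR uvec y = dotR uvec x → y = x) := by
      intro y hyP
      have hyV' : y ∈ convexHull ℝ (V' : Set (Fin n → ℝ)) := by rwa [hhull] at hyP
      rw [Finset.convexHull_eq] at hyV'
      obtain ⟨w, hw0, hw1, hwy⟩ := hyV'
      rw [Finset.centerMass_eq_of_sum_1 _ _ hw1] at hwy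
      have hsplit : ∑ v ∈ V', w v • id v
          = w x • x + ∑ v ∈ V'.erase x, w v • v := by
        rw [← Finset.add_sum_erase _ _ hxV']
        rfl
      have hw1' : w x + ∑ v ∈ V'.erase x, w v = 1 := by
        rw [← Finset.add_sum_erase _ _ hxV'] at hw1
        exact hw1
      have hsumnn : 0 ≤ ∑ v ∈ V'.erase x, w v :=
        Finset.sum_nonneg (fun v hv => hw0 v (Finset.mem_of_mem_erase hv))
      have hwx1 : w x ≤ 1 := by linarith
      rcases eq_or_lt_of_le hwx1 with heq1 | hlt1
      · -- y = x
        have hzero : ∀ v ∈ V'.erase x, w v = 0 := by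
          have hsum0 : ∑ v ∈ V'.erase x, w v = 0 := by linarith
          intro v hv
          exact (Finset.sum_eq_zero_iff_of_nonneg
            (fun v hv => hw0 v (Finset.mem_of_mem_erase hv))).mp hsum0 v hv
        have hyx : y = x := by
          rw [← hwy, hsplit, heq1, one_smul]
          rw [Finset.sum_eq_zero (fun v hv => by rw [hzero v hv, zero_smul])]
          exact add_zero x
        exact ⟨le_of_eq (by rw [hyx]), fun _ => hyx⟩
      · -- strict
        set s := ∑ v ∈ V'.erase x, w v with hs
        have hspos : 0 < s := by linarith
        set z := (V'.erase x).centerMass w id with hz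
        have hzK : z ∈ K := Finset.centerMass_mem_convexHull _
          (fun v hv => hw0 v (Finset.mem_of_mem_erase hv)) hspos
          (fun v hv => show (id v) ∈ ((V'.erase x : Finset (Fin n → ℝ)) : Set (Fin n → ℝ)) from Finset.mem_coe.mpr hv)
        have hzsum : ∑ v ∈ V'.erase x, w v • v = s • z := by
          rw [hz, Finset.centerMass, smul_smul, mul_inv_cancel₀ (ne_of_gt hspos), one_smul]
          rfl
        have hfy : f y = w x * f x + s * f z := by
          rw [← hwy, hsplit, hzsum]
          rw [map_add, map_smul, map_smul, smul_eq_mul, smul_eq_mul]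
        have hfz : f z < c' := hfK z hzK
        have hflt : f y < f x := by
          have : f y < w x * f x + s * f x := by
            have := mul_lt_mul_of_pos_left (lt_trans hfz hfx) hspos
            linarith
          calc f y < w x * f x + s * f x := this
          _ = f x := by rw [← add_mul, hw1']; ring
        rw [hfdot y, hfdot x] at hflt
        exact ⟨le_of_lt hflt, fun h => absurd h (ne_of_lt hflt)⟩
    have hvert : IsVertexOf P x := by
      refine ⟨uvec, ?_⟩
      apply Set.eq_of_subset_of_subset
      · intro z hz
        rw [Set.mem_singleton_iff] at hz
        subst hz
        exact ⟨hxP, fun y hy => (hkey y hy).1⟩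
      · rintro z ⟨hzP, hzmax⟩
        have h1 : dotR uvec z ≤ dotR uvec x := (hkey z hzP).1
        have h2 : dotR uvec x ≤ dotR uvec z := hzmax x hxP
        exact (hkey z hzP).2 (le_antisymm h1 h2)
    exact (hV x).mp hvert
  constructor
  · apply Set.eq_of_subset_of_subset
    · have hcomp : IsCompact P := by
        rw [hhull]; exact V'.finite_toSet.isCompact_convexHull ℝ
      have hKM := closure_convexHull_extremePoints hcomp hconvP
      rw [← hKM]
      have h1 : convexHull ℝ (Set.extremePoints ℝ P) ⊆ convexHull ℝ (V : Set (Fin n → ℝ)) :=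
        convexHull_mono hext_V
      have h2 : IsClosed (convexHull ℝ (V : Set (Fin n → ℝ))) :=
        V.finite_toSet.isClosed_convexHull ℝ
      calc closure (convexHull ℝ (Set.extremePoints ℝ P))
          ⊆ closure (convexHull ℝ (V : Set (Fin n → ℝ))) := closure_mono h1
        _ = convexHull ℝ (V : Set (Fin n → ℝ)) := h2.closure_eq
    · exact convexHull_min hVP hconvP
  · intro v hv
    have hx := hV_ext hv
    have : v ∈ Set.extremePoints ℝ (convexHull ℝ (V' : Set (Fin n → ℝ))) := by
      rwa [hhull] at hx
    exact extremePoints_convexHull_subset this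

end Aux3
section Aux4
open Finset

/-- the standard vertices of the monotone simplex -/
noncomputable def msVert (n : ℕ) : Fin (n + 1) → (Fin n → ℝ) :=
  Fin.cases (fun _ => -1) (fun a₀ => fun a => if a₀ = a then (n : ℝ) else -1)

lemma monotoneSimplex_convex (n : ℕ) : Convex ℝ (monotoneSimplex n) := by
  intro x hx y hy a b ha hb hab
  obtain ⟨hx1, hx2⟩ := hx
  obtain ⟨hy1, hy2⟩ := hy
  constructor
  · intro i
    have : (a • x + b • y) i = a * x i + b * y i := rfl
    rw [this]
    nlinarith [hx1 i, hy1 i, mul_le_mul_of_nonneg_left (hx1 i) ha,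
      mul_le_mul_of_nonneg_left (hy1 i) hb]
  · have hsum : ∑ i, (a • x + b • y) i = a * ∑ i, x i + b * ∑ i, y i := by
      rw [Finset.mul_sum, Finset.mul_sum, ← Finset.sum_add_distrib]
      rfl
    rw [hsum]
    nlinarith [mul_le_mul_of_nonneg_left hx2 ha, mul_le_mul_of_nonneg_left hy2 hb]

lemma msVert_mem (n : ℕ) (k : Fin (n + 1)) : msVert n k ∈ monotoneSimplex n := by
  refine Fin.cases ?_ ?_ k
  · constructor
    · intro i; simp [msVert]
    · simp [msVert, Finset.sum_const]
      have : (n : ℝ) ≥ 0 := Nat.cast_nonneg n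
      linarith
  · intro a₀
    constructor
    · intro i
      simp only [msVert, Fin.cases_succ]
      split
      · have : (0:ℝ) ≤ n := Nat.cast_nonneg n; linarith
      · exact le_refl _
    · simp only [msVert, Fin.cases_succ]
      have hsplit : ∀ a : Fin n, (if a₀ = a then (n : ℝ) else -1)
          = (if a₀ = a then (n : ℝ) + 1 else 0) - 1 := by
        intro a; split <;> ring
      rw [Finset.sum_congr rfl (fun a _ => hsplit a)]
      rw [Finset.sum_sub_distrib, Finset.sum_ite_eq Finset.univ a₀ (fun _ => (n:ℝ)+1)]
      simp

lemma msVert_zero (n : ℕ) (a : Fin n) : msVert n 0 a = -1 := by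
  simp [msVert]

lemma msVert_succ (n : ℕ) (b : Fin n) (a : Fin n) :
    msVert n b.succ a = if b = a then (n : ℝ) else -1 := by
  simp [msVert]

lemma hull_msVert (n : ℕ) :
    convexHull ℝ (Set.range (msVert n)) = monotoneSimplex n := by
  apply Set.eq_of_subset_of_subset
  · apply convexHull_min _ (monotoneSimplex_convex n)
    rintro x ⟨k, rfl⟩
    exact msVert_mem n k
  · intro x hx
    obtain ⟨hx1, hx2⟩ := hx
    set μ : Fin (n + 1) → ℝ :=
      Fin.cases ((1 - ∑ i, x i) / (n + 1)) (fun a => (x a + 1) / (n + 1)) with hμ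
    have hnpos : (0 : ℝ) < n + 1 := by positivity
    have hμ0 : μ 0 = (1 - ∑ i, x i) / (n + 1) := rfl
    have hμs : ∀ a : Fin n, μ a.succ = (x a + 1) / (n + 1) := fun a => rfl
    have hμnn : ∀ k ∈ Finset.univ, 0 ≤ μ k := by
      intro k _
      refine Fin.cases ?_ ?_ k
      · rw [hμ0]; apply div_nonneg _ hnpos.le; linarith
      · intro a; rw [hμs]; apply div_nonneg _ hnpos.le; linarith [hx1 a]
    have hμsum : ∑ k, μ k = 1 := by
      rw [Fin.sum_univ_succ, hμ0]
      have : ∑ a : Fin n, μ a.succ = (∑ a, x a + n) / (n + 1) := by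
        rw [Finset.sum_congr rfl (fun a _ => hμs a)]
        rw [← Finset.sum_div]
        congr 1
        rw [Finset.sum_add_distrib, Finset.sum_const]
        simp
      rw [this]
      field_simp
      ring
    have hcm : Finset.univ.centerMass μ (msVert n) = x := by
      rw [Finset.centerMass_eq_of_sum_1 _ _ hμsum]
      funext a
      have happ : (∑ k, μ k • msVert n k) a = ∑ k, μ k * msVert n k a := by
        rw [Finset.sum_apply]
        rfl
      rw [happ, Fin.sum_univ_succ]
      have h0 : μ 0 * msVert n 0 a = -μ 0 := by
        simp [msVert]
      have hs : ∀ a₀ : Fin n, μ a₀.succ * msVert n a₀.succ a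
          = (if a₀ = a then ((n:ℝ)+1) * μ a.succ else 0) - μ a₀.succ := by
        intro a₀
        simp only [msVert, Fin.cases_succ]
        split
        · rename_i h; subst h; ring
        · ring
      rw [h0, Finset.sum_congr rfl (fun a₀ _ => hs a₀), Finset.sum_sub_distrib,
        Finset.sum_ite_eq' Finset.univ a (fun _ => ((n:ℝ)+1) * μ a.succ)]
      simp only [Finset.mem_univ, if_true]
      have : -μ 0 + (((n:ℝ)+1) * μ a.succ - ∑ a₀ : Fin n, μ a₀.succ) 
          = ((n:ℝ)+1) * μ a.succ - (μ 0 + ∑ a₀ : Fin n, μ a₀.succ) := by ring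
      rw [this, ← Fin.sum_univ_succ (f := μ), hμsum, hμs]
      field_simp
      ring
    rw [← hcm]
    exact Finset.centerMass_mem_convexHull _ hμnn (by rw [hμsum]; norm_num)
      (fun k _ => Set.mem_range_self k)

end Aux4
section Aux5
open Finset

variable {n : ℕ}

/-- Collinearity of a segment. -/
lemma collinear_segment' (a b : Fin n → ℝ) : Collinear ℝ (segment ℝ a b) := by
  have hvs : vectorSpan ℝ (segment ℝ a b) = vectorSpan ℝ ({a, b} : Set (Fin n → ℝ)) := by
    rw [← convexHull_pair, ← direction_affineSpan, affineSpan_convexHull, direction_affineSpan]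
  have h2 := collinear_pair ℝ a b
  unfold Collinear at *
  rwa [hvs]

/-- Structure of the edges at a vertex of a simplex. -/
lemma edge_structure (hn : 0 < n)
    (V : Finset (Fin n → ℝ)) (w : Fin (n+1) → Fin n → ℝ)
    (hwinj : Function.Injective w) (hrange : Set.range w = (V : Set (Fin n → ℝ)))
    (haff : AffineIndependent ℝ w)
    (P : Set (Fin n → ℝ)) (hPV : P = convexHull ℝ (V : Set (Fin n → ℝ)))
    (W : Fin (n+1) → Fin n → ℤ) (hW : ∀ j m, ((W j m : ℝ)) = w j m)
    (k : Fin (n+1))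
    (E : Fin n → Set (Fin n → ℝ)) (d : Fin n → Fin n → ℤ)
    (hEdata : ∀ i, IsEdgeOf P (E i) ∧ w k ∈ E i ∧ EdgeDirAt (w k) (E i) (d i))
    (hdet : IsUnit (Matrix.det (Matrix.of d))) :
    ∃ σ : Fin n → Fin (n+1), (∀ i, σ i ≠ k) ∧ Function.Injective σ ∧
      (∀ j, j ≠ k → ∃ i, σ i = j) ∧ (∀ i, IsPrimitiveZ (d i)) ∧
      ∀ i, ∃ g : ℤ, 0 < g ∧ (∀ m, W (σ i) m = W k m + g * d i m) := by
  classical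
  haveI : NeZero n := ⟨by omega⟩
  have hwkV : w k ∈ V := by
    rw [← Finset.mem_coe, ← hrange]; exact Set.mem_range_self k
  -- for each edge, find the other endpoint
  have hmain : ∀ i : Fin n, ∃ j : Fin (n+1), j ≠ k ∧
      (∃ g : ℤ, 0 < g ∧ (∀ m, W j m = W k m + g * d i m)) := by
    intro i
    obtain ⟨⟨hface, a, b, hab, hseg⟩, hmem, hdprim, ws, hws, t, ht, hwd⟩ := hEdata i
    obtain ⟨u, hEdef⟩ := hface
    -- the face is the hull of the maximizing vertices
    obtain ⟨v₀, hv₀V, hv₀max⟩ := Finset.exists_max_image V (dotR u) ⟨w k, hwkV⟩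
    set c := dotR u v₀ with hc
    set S := V.filter (fun y => dotR u y = c) with hS
    have hSV : S ⊆ V := Finset.filter_subset _ _
    have hv₀S : v₀ ∈ S := Finset.mem_filter.mpr ⟨hv₀V, rfl⟩
    have hES : E i = convexHull ℝ (S : Set (Fin n → ℝ)) := by
      rw [hEdef, hPV]
      exact maximizer_hull V u c S hSV ⟨v₀, hv₀S⟩
        (fun v hv => (Finset.mem_filter.mp hv).2)
        (fun v hv hvS => lt_of_le_of_ne (hv₀max v hv)
          (fun hne => hvS (Finset.mem_filter.mpr ⟨hv, hne⟩)))
    -- w k is a maximizer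
    have hwkE := hmem
    have hwkS : w k ∈ S := by
      rw [hEdef] at hwkE
      obtain ⟨hwkP, hwkmax⟩ := hwkE
      have hv₀P : v₀ ∈ P := by
        rw [hPV]; exact subset_convexHull ℝ _ (Finset.mem_coe.mpr hv₀V)
      have h1 : c ≤ dotR u (w k) := hwkmax v₀ hv₀P
      have h2 : dotR u (w k) ≤ c := hv₀max _ hwkV
      exact Finset.mem_filter.mpr ⟨hwkV, le_antisymm h2 h1⟩
    -- S contains another vertex
    have hSother : ∃ y ∈ S, y ≠ w k := by
      by_contra hcon
      push_neg at hcon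
      have hSsub : (S : Set (Fin n → ℝ)) = {w k} := by
        apply Set.eq_of_subset_of_subset
        · intro y hy; exact hcon y (Finset.mem_coe.mp hy)
        · intro y hy; rw [Set.mem_singleton_iff] at hy; subst hy
          exact Finset.mem_coe.mpr hwkS
      rw [hSsub, convexHull_singleton] at hES
      have ha : a ∈ E i := by rw [hseg]; exact left_mem_segment ℝ a b
      have hb : b ∈ E i := by rw [hseg]; exact right_mem_segment ℝ a b
      rw [hES] at ha hb
      exact hab (ha.trans hb.symm)
    obtain ⟨y, hyS, hyk⟩ := hSother
    have hyV : y ∈ V := hSV hyS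
    obtain ⟨j, hj⟩ : ∃ j, w j = y := by
      have : y ∈ Set.range w := by rw [hrange]; exact Finset.mem_coe.mpr hyV
      exact this
    have hjk : j ≠ k := fun h => hyk (by rw [← hj, h])
    -- S = {w k, w j}
    have hcolE : Collinear ℝ (E i) := by
      rw [hseg]; exact collinear_segment' a b
    have hSsub2 : (S : Set (Fin n → ℝ)) ⊆ {w k, w j} := by
      intro z hz
      by_contra hzc
      simp only [Set.mem_insert_iff, Set.mem_singleton_iff] at hzc
      push_neg at hzc
      obtain ⟨hz1, hz2⟩ := hzc
      obtain ⟨l, hl⟩ : ∃ l, w l = z := by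
        have : z ∈ Set.range w := by
          rw [hrange]; exact Finset.coe_subset.mpr hSV hz
        exact this
      have hlk : l ≠ k := fun h => hz1 (by rw [← hl, h])
      have hlj : l ≠ j := fun h => hz2 (by rw [← hl, h, hj])
      -- three distinct affinely independent points on a line
      have hkj : k ≠ j := fun h => hjk h.symm
      set emb : Fin 3 → Fin (n+1) := ![k, j, l] with hemb
      have hembinj : Function.Injective emb := by
        intro x y hxy
        have h0 : emb 0 = k := rfl
        have h1 : emb 1 = j := rfl
        have h2 : emb 2 = l := rfl
        fin_cases x <;> fin_cases y
        · rfl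
        · exact absurd ((h0.symm.trans hxy).trans h1) hkj
        · exact absurd ((h0.symm.trans hxy).trans h2) (Ne.symm hlk)
        · exact absurd ((h1.symm.trans hxy).trans h0) hjk
        · rfl
        · exact absurd ((h1.symm.trans hxy).trans h2) (Ne.symm hlj)
        · exact absurd ((h2.symm.trans hxy).trans h0) hlk
        · exact absurd ((h2.symm.trans hxy).trans h1) hlj
        · rfl
      have haff3 : AffineIndependent ℝ (w ∘ emb) :=
        haff.comp_embedding ⟨emb, hembinj⟩
      have hnotcol := affineIndependent_iff_not_collinear.mp haff3
      apply hnotcol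
      apply hcolE.subset
      rintro p ⟨m, rfl⟩
      have hSE : (S : Set (Fin n → ℝ)) ⊆ E i := by
        rw [hES]; exact subset_convexHull ℝ _
      fin_cases m
      · exact hmem
      · show w j ∈ E i
        rw [hj]; exact hSE (Finset.mem_coe.mpr hyS)
      · show w l ∈ E i
        rw [hl]; exact hSE hz
    have hSeq : (S : Set (Fin n → ℝ)) = {w k, w j} := by
      apply Set.eq_of_subset_of_subset hSsub2
      intro z hz
      simp only [Set.mem_insert_iff, Set.mem_singleton_iff] at hz
      rcases hz with h | h
      · subst h; exact Finset.mem_coe.mpr hwkS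
      · subst h; rw [hj]; exact Finset.mem_coe.mpr hyS
    have hEseg : E i = segment ℝ (w k) (w j) := by
      rw [hES, hSeq, convexHull_pair]
    -- direction
    rw [hEseg] at hws
    rw [segment_eq_image] at hws
    obtain ⟨θ, hθ, hwsθ⟩ := hws
    have hwsm : ∀ m, ws m - w k m = θ * (w j m - w k m) := by
      intro m
      have h2 : (1 - θ) * w k m + θ * w j m = ws m := congrFun hwsθ m
      linear_combination -h2
    have hθpos : 0 < θ := by
      rcases lt_or_eq_of_le hθ.1 with h | h
      · exact h
      · exfalso
        have hd0 : ∀ m, (d i m : ℝ) = 0 := by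
          intro m
          have h1 := hwd m
          have h2 := hwsm m
          rw [← h] at h2
          simp at h2
          rw [h2] at h1
          have := h1.symm
          rcases mul_eq_zero.mp this with h3 | h3
          · linarith
          · exact h3
        apply primitive_ne_zero hdprim
        funext m
        exact_mod_cast hd0 m
    -- d i is the primitive direction of W j - W k
    have hzne : (fun m => W j m - W k m) ≠ 0 := by
      intro hcon
      apply hjk
      apply hwinj
      funext m
      have h1 : W j m - W k m = 0 := congrFun hcon m
      have h2 : W j m = W k m := by omega
      rw [← hW j m, ← hW k m, h2]
    obtain ⟨g, dd, hg, hddprim, hzg⟩ := exists_primDir (fun m => W j m - W k m) hzne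
    have htne : (t : ℝ) ≠ 0 := ne_of_gt ht
    have hreal : ∀ m, (d i m : ℝ) = (θ * (g : ℝ) / t) * (dd m : ℝ) := by
      intro m
      have h1 := hwd m
      have h2 := hwsm m
      have h12 : t * (d i m : ℝ) = θ * (w j m - w k m) := by
        rw [← h1]; exact h2
      have h3 : w j m - w k m = (g : ℝ) * (dd m : ℝ) := by
        rw [← hW j m, ← hW k m]
        have := hzg m
        exact_mod_cast this
      rw [h3] at h12
      field_simp
      linarith [h12]
    have hrpos : 0 < θ * (g : ℝ) / t := by
      apply div_pos _ ht
      apply mul_pos hθpos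
      exact_mod_cast hg
    have hdd : d i = dd := primitive_unique hdprim hddprim _ hrpos hreal
    refine ⟨j, hjk, g, hg, fun m => ?_⟩
    have := hzg m
    rw [hdd]
    omega
  choose σ hσk hσg using hmain
  have hdprim : ∀ i, IsPrimitiveZ (d i) := fun i => (hEdata i).2.2.1
  have hσinj : Function.Injective σ := by
    intro i i' hii'
    by_contra hne
    obtain ⟨g, hg, hgd⟩ := hσg i
    obtain ⟨g', hg', hgd'⟩ := hσg i'
    have heqm : ∀ m, g * d i m = g' * d i' m := by
      intro m
      have h1 := hgd m
      have h2 := hgd' m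
      rw [hii'] at h1
      omega
    have hgne : (g : ℝ) ≠ 0 := by
      have : (0:ℝ) < g := by exact_mod_cast hg
      linarith
    have hdd : d i = d i' := by
      apply primitive_unique (hdprim i) (hdprim i') ((g' : ℝ) / g)
      · apply div_pos
        · exact_mod_cast hg'
        · exact_mod_cast hg
      · intro m
        have : (g : ℝ) * (d i m : ℝ) = (g' : ℝ) * (d i' m : ℝ) := by
          exact_mod_cast heqm m
        field_simp
        linarith [this]
    have hdet0 : Matrix.det (Matrix.of d) = 0 := by
      apply Matrix.det_zero_of_row_eq hne
      exact hdd
    rw [hdet0] at hdet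
    simp at hdet
  have hσsurj : ∀ j, j ≠ k → ∃ i, σ i = j := by
    have hcard : Fintype.card (Fin n) = Fintype.card {j : Fin (n+1) // j ≠ k} := by
      rw [Fintype.card_fin]
      have h1 : Fintype.card {j : Fin (n+1) // ¬ (j = k)} = n + 1 - 1 := by
        rw [Fintype.card_subtype_compl, Fintype.card_subtype_eq, Fintype.card_fin]
      rw [show Fintype.card {j : Fin (n+1) // j ≠ k} = Fintype.card {j : Fin (n+1) // ¬ (j = k)} from rfl, h1]
      omega
    have hbij : Function.Bijective (fun i => (⟨σ i, hσk i⟩ : {j : Fin (n+1) // j ≠ k})) := by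
      rw [Fintype.bijective_iff_injective_and_card]
      refine ⟨fun a b hab => hσinj (congrArg Subtype.val hab), hcard⟩
    intro j hj
    obtain ⟨i, hi⟩ := hbij.2 ⟨j, hj⟩
    exact ⟨i, congrArg Subtype.val hi⟩
  exact ⟨σ, hσk, hσinj, hσsurj, hdprim, hσg⟩

end Aux5
section Aux6
open Finset

variable {n : ℕ}

lemma facet_normal_at (hn : 0 < n)
    (V : Finset (Fin n → ℝ)) (w : Fin (n+1) → Fin n → ℝ)
    (hwinj : Function.Injective w) (hrange : Set.range w = (V : Set (Fin n → ℝ)))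
    (haff : AffineIndependent ℝ w)
    (P : Set (Fin n → ℝ)) (hPV : P = convexHull ℝ (V : Set (Fin n → ℝ)))
    (hrefl : ∀ F u, IsFacetNormal P F u → ∀ x ∈ F, dotZ u x = 1)
    (k : Fin (n+1)) (σ : Fin n → Fin (n+1)) (hσk : ∀ i, σ i ≠ k)
    (hσinj : Function.Injective σ) (hσsurj : ∀ j, j ≠ k → ∃ i, σ i = j)
    (d : Fin n → Fin n → ℤ) (hdet : IsUnit (Matrix.det (Matrix.of d)))
    (g : Fin n → ℤ) (hg : ∀ i, 0 < g i)
    (hedge : ∀ i m, w (σ i) m = w k m + (g i : ℝ) * (d i m : ℝ))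
    (a : Fin n) :
    ∃ ν : Fin n → ℤ, (∀ m, ν m = -((Matrix.of d)⁻¹ m a)) ∧ IsPrimitiveZ ν ∧
      (∀ j : Fin (n+1), dotZ ν (w j) = if j = σ a then 1 - (g a : ℝ) else 1) := by
  classical
  haveI : NeZero n := ⟨by omega⟩
  set D := Matrix.of d with hD
  set ν : Fin n → ℤ := fun m => -(D⁻¹ m a) with hν
  have hDmul : D * D⁻¹ = 1 := Matrix.mul_nonsing_inv D hdet
  have hmulentry : ∀ b, ∑ m, D b m * D⁻¹ m a = if b = a then 1 else 0 := by
    intro b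
    have h1 : (D * D⁻¹) b a = (1 : Matrix (Fin n) (Fin n) ℤ) b a := by rw [hDmul]
    rw [Matrix.mul_apply, Matrix.one_apply] at h1
    exact h1
  have hdot : ∀ b, dotI ν (d b) = if b = a then -1 else 0 := by
    intro b
    have h2 : dotI ν (d b) = -∑ m, D b m * D⁻¹ m a := by
      rw [dotI, ← Finset.sum_neg_distrib]
      refine Finset.sum_congr rfl fun m _ => ?_
      show ν m * d b m = -(D b m * D⁻¹ m a)
      show -(D⁻¹ m a) * d b m = -(D b m * D⁻¹ m a)
      have hDb : D b m = d b m := rfl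
      rw [hDb]; ring
    rw [h2, hmulentry b]
    split <;> norm_num
  have hprim : IsPrimitiveZ ν := by
    have hsum : ∑ m, d a m * (-(ν m)) = 1 := by
      have h1 : ∑ m, D a m * D⁻¹ m a = 1 := by simpa using hmulentry a
      rw [← h1]
      refine Finset.sum_congr rfl fun m _ => ?_
      show d a m * (-(ν m)) = D a m * D⁻¹ m a
      show d a m * (-(-(D⁻¹ m a))) = D a m * D⁻¹ m a
      rw [neg_neg]; rfl
    have hdvd : (Finset.univ.gcd ν) ∣ 1 := by
      rw [← hsum]
      apply Finset.dvd_sum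
      intro m _
      exact Dvd.dvd.mul_left ((Finset.gcd_dvd (Finset.mem_univ m)).neg_right) _
    exact Int.eq_one_of_dvd_one (gcdZ_nonneg ν) hdvd
  have hval : ∀ b, dotZ ν (w (σ b)) =
      dotZ ν (w k) + (g b : ℝ) * ((if b = a then (-1:ℤ) else 0 : ℤ) : ℝ) := by
    intro b
    rw [show ((if b = a then (-1:ℤ) else 0 : ℤ)) = dotI ν (d b) from (hdot b).symm]
    exact dotZ_shift ν (d b) (w k) (w (σ b)) (g b) (hedge b)
  set x₀ := w (σ a) with hx₀
  set S := V.erase x₀ with hSdef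
  have hwkV : w k ∈ V := by
    rw [← Finset.mem_coe, ← hrange]; exact Set.mem_range_self k
  have hwkne : w k ≠ x₀ := fun h => (hσk a) (hwinj h.symm)
  have hwkS : w k ∈ S := Finset.mem_erase.mpr ⟨hwkne, hwkV⟩
  have hgapos : (0:ℝ) < (g a : ℝ) := by exact_mod_cast hg a
  have hvertex_val : ∀ v ∈ S, dotR (fun m => (ν m : ℝ)) v = dotZ ν (w k) := by
    intro v hv
    obtain ⟨hvne, hvV⟩ := Finset.mem_erase.mp hv
    obtain ⟨j, rfl⟩ : ∃ j, w j = v := by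
      have : v ∈ Set.range w := by rw [hrange]; exact Finset.mem_coe.mpr hvV
      exact this
    have hja : j ≠ σ a := fun h => hvne (by rw [h])
    rcases eq_or_ne j k with rfl | hjk
    · rfl
    · obtain ⟨b, rfl⟩ := hσsurj j hjk
      have hba : b ≠ a := fun h => hja (by rw [h])
      have := hval b
      rw [if_neg hba] at this
      exact (by simpa using this : dotZ ν (w (σ b)) = dotZ ν (w k))
  have hother_lt : ∀ v ∈ V, v ∉ S → dotR (fun m => (ν m : ℝ)) v < dotZ ν (w k) := by
    intro v hvV hvS
    have hveq : v = x₀ := by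
      by_contra hne
      exact hvS (Finset.mem_erase.mpr ⟨hne, hvV⟩)
    subst hveq
    have := hval a
    rw [if_pos rfl] at this
    have h2 : dotZ ν x₀ = dotZ ν (w k) - (g a : ℝ) := by
      rw [hx₀, this]; push_cast; ring
    show dotR (fun m => (ν m : ℝ)) x₀ < dotZ ν (w k)
    rw [show dotR (fun m => (ν m : ℝ)) x₀ = dotZ ν x₀ from rfl, h2]
    linarith
  have hface_eq : {x ∈ P | ∀ y ∈ P, dotZ ν y ≤ dotZ ν x}
      = convexHull ℝ (S : Set (Fin n → ℝ)) := by
    rw [hPV]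
    exact maximizer_hull V (fun m => (ν m : ℝ)) (dotZ ν (w k)) S
      (Finset.erase_subset _ _) ⟨w k, hwkS⟩ hvertex_val hother_lt
  have hSset : (S : Set (Fin n → ℝ)) = Set.range (w ∘ (σ a).succAbove) := by
    rw [hSdef, Finset.coe_erase, ← hrange, Set.range_comp, Fin.range_succAbove]
    apply Set.eq_of_subset_of_subset
    · rintro z ⟨⟨j, rfl⟩, hz2⟩
      refine ⟨j, ?_, rfl⟩
      simp only [Set.mem_compl_iff, Set.mem_singleton_iff]
      intro h
      apply hz2
      rw [h]
      exact rfl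
    · rintro z ⟨j, hj, rfl⟩
      simp only [Set.mem_compl_iff, Set.mem_singleton_iff] at hj
      refine ⟨⟨j, rfl⟩, ?_⟩
      intro h
      rw [Set.mem_singleton_iff] at h
      exact hj (hwinj h)
  have hFN : IsFacetNormal P {x ∈ P | ∀ y ∈ P, dotZ ν y ≤ dotZ ν x} ν := by
    refine ⟨hprim, ⟨⟨fun m => (ν m : ℝ), rfl⟩, ?_, ?_⟩, rfl⟩
    · rw [hface_eq]
      exact ⟨w k, subset_convexHull ℝ _ (Finset.mem_coe.mpr hwkS)⟩
    · have haff' : AffineIndependent ℝ (w ∘ (σ a).succAbove) :=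
        haff.comp_embedding ((σ a).succAboveEmb)
      have hcard : Fintype.card (Fin n) = (n - 1) + 1 := by
        rw [Fintype.card_fin]; omega
      have hfr := haff'.finrank_vectorSpan hcard
      have hdim : dimSet {x ∈ P | ∀ y ∈ P, dotZ ν y ≤ dotZ ν x} = n - 1 := by
        rw [dimSet, hface_eq]
        have hvs : vectorSpan ℝ (convexHull ℝ (S : Set (Fin n → ℝ)))
            = vectorSpan ℝ (S : Set (Fin n → ℝ)) := by
          rw [← direction_affineSpan, affineSpan_convexHull, direction_affineSpan]
        rw [hvs, hSset]
        exact hfr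
      rw [hdim]; omega
  have hwkF : w k ∈ {x ∈ P | ∀ y ∈ P, dotZ ν y ≤ dotZ ν x} := by
    rw [hface_eq]
    exact subset_convexHull ℝ _ (Finset.mem_coe.mpr hwkS)
  have hone : dotZ ν (w k) = 1 := hrefl _ ν hFN (w k) hwkF
  refine ⟨ν, fun m => rfl, hprim, fun j => ?_⟩
  rcases eq_or_ne j (σ a) with rfl | hja
  · rw [if_pos rfl]
    have := hval a
    rw [if_pos rfl] at this
    rw [this, hone]
    push_cast; ring
  · rw [if_neg hja]
    have hwjS : w j ∈ S := by
      refine Finset.mem_erase.mpr ⟨?_, ?_⟩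
      · intro h; exact hja (hwinj h)
      · rw [← Finset.mem_coe, ← hrange]; exact Set.mem_range_self j
    have hwjF : w j ∈ {x ∈ P | ∀ y ∈ P, dotZ ν y ≤ dotZ ν x} := by
      rw [hface_eq]
      exact subset_convexHull ℝ _ (Finset.mem_coe.mpr hwjS)
    exact hrefl _ ν hFN (w j) hwjF

end Aux6

/-- every monotone polytope `P ⊆ ℝ^n` which is a simplex (i.e.,
has exactly `n + 1` vertices) is `GL(n,ℤ)`-equivalent to the monotone simplex
`Δ = {x : x i ≥ -1 ∀ i, ∑ x i ≤ 1}`. -/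
theorem monotone_simplex_unique {n : ℕ} (P : Set (Fin n → ℝ))
    (hP : IsMonotonePolytope P) (V : Finset (Fin n → ℝ))
    (hV : ∀ v, IsVertexOf P v ↔ v ∈ V) (hcard : V.card = n + 1) :
    ∃ A : Matrix (Fin n) (Fin n) ℤ, IsUnit A.det ∧
      (fun x : Fin n → ℝ => fun i => ∑ j, (A i j : ℝ) * x j) '' P =
        monotoneSimplex n := by
  classical
  rcases Nat.eq_zero_or_pos n with hn0 | hn
  · -- the zero-dimensional case
    subst hn0
    refine ⟨1, by simp, ?_⟩
    have hVne : V.Nonempty := Finset.card_pos.mp (by rw [hcard]; omega)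
    obtain ⟨v, hv⟩ := hVne
    have hvP : v ∈ P := (vertex_strict ((hV v).mpr hv)).1
    apply Set.eq_of_subset_of_subset
    · intro y _
      exact ⟨fun i => i.elim0, by simp⟩
    · intro y _
      refine ⟨v, hvP, ?_⟩
      funext i
      exact i.elim0
  -- the main case
  haveI : NeZero n := ⟨by omega⟩
  haveI : Nonempty (Fin n) := ⟨⟨0, hn⟩⟩
  obtain ⟨⟨V', hV'lat, hPhull, hspan⟩, hsmooth, hrefl0⟩ := hP
  have hrefl := hrefl0.2
  obtain ⟨hPV, hVV'⟩ := hull_eq_vertices P V' hPhull V hV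
  have hVlat : ∀ v ∈ V, IsLatticePt v := fun v hv =>
    hV'lat v (Finset.mem_coe.mp (hVV' (Finset.mem_coe.mpr hv)))
  -- enumerate the vertices
  set e : Fin (n + 1) ≃ {x // x ∈ V} := (V.equivFin.trans (finCongr hcard)).symm with he
  set w : Fin (n+1) → Fin n → ℝ := fun k => (e k : Fin n → ℝ) with hwdef
  have hwinj : Function.Injective w := fun k l h => e.injective (Subtype.ext h)
  have hwV : ∀ k, w k ∈ V := fun k => (e k).2
  have hrange : Set.range w = (V : Set (Fin n → ℝ)) := by
    apply Set.eq_of_subset_of_subset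
    · rintro y ⟨k, rfl⟩
      exact Finset.mem_coe.mpr (hwV k)
    · intro y hy
      refine ⟨e.symm ⟨y, hy⟩, ?_⟩
      show ((e (e.symm ⟨y, hy⟩)) : Fin n → ℝ) = y
      rw [Equiv.apply_symm_apply]
  have hwvert : ∀ k, IsVertexOf P (w k) := fun k => (hV _).mpr (hwV k)
  -- affine independence
  have hspanV : affineSpan ℝ (Set.range w) = ⊤ := by
    rw [hrange]
    have h1 : affineSpan ℝ P = affineSpan ℝ (V : Set (Fin n → ℝ)) := by
      rw [hPV, affineSpan_convexHull]
    rw [← h1, hspan]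
  have haff : AffineIndependent ℝ w := by
    rw [affineIndependent_iff_finrank_vectorSpan_eq ℝ w (Fintype.card_fin (n+1))]
    rw [← direction_affineSpan, hspanV, AffineSubspace.direction_top]
    rw [finrank_top, Module.finrank_pi, Fintype.card_fin]
  -- integer coordinates
  have hWex : ∀ k m, ∃ z : ℤ, w k m = (z : ℝ) := fun k m => (hVlat _ (hwV k)) m
  choose W hW using hWex
  have hW' : ∀ j m, ((W j m : ℝ)) = w j m := fun j m => (hW j m).symm
  -- structure at each vertex
  have hstep : ∀ k : Fin (n+1),
      ∃ (σ : Fin n → Fin (n+1)) (d : Fin n → Fin n → ℤ) (g : Fin n → ℤ),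
      (∀ i, σ i ≠ k) ∧ Function.Injective σ ∧ (∀ j, j ≠ k → ∃ i, σ i = j) ∧
      IsUnit (Matrix.det (Matrix.of d)) ∧ (∀ i, IsPrimitiveZ (d i)) ∧ (∀ i, 0 < g i) ∧
      (∀ i m, W (σ i) m = W k m + g i * d i m) := by
    intro k
    obtain ⟨_, E, d, hEinj, hEdata, hEcompl, hdet⟩ := hsmooth (w k) (hwvert k)
    obtain ⟨σ, hσk, hσinj, hσsurj, hdprim, hσg⟩ :=
      edge_structure hn V w hwinj hrange haff P hPV W hW' k E d hEdata hdet
    choose g hgpos hgd using hσg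
    exact ⟨σ, d, g, hσk, hσinj, hσsurj, hdet, hdprim, hgpos, hgd⟩
  choose σf df gf hσk hσinj hσsurj hdet hdprim hgpos hgd using hstep
  -- real edge relations
  have hedge : ∀ k i m, w (σf k i) m = w k m + ((gf k i : ℝ)) * ((df k i m : ℝ)) := by
    intro k i m
    have h1 : ((W (σf k i) m : ℝ)) = (W k m : ℝ) + (gf k i : ℝ) * (df k i m : ℝ) := by
      exact_mod_cast congrArg (fun z : ℤ => (z : ℝ)) (hgd k i m)
    rw [hW' (σf k i) m, hW' k m] at h1
    exact h1
  -- facet normals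
  have hfacet : ∀ k a, ∃ ν : Fin n → ℤ, (∀ m, ν m = -((Matrix.of (df k))⁻¹ m a)) ∧
      IsPrimitiveZ ν ∧
      (∀ j, dotZ ν (w j) = if j = σf k a then 1 - (gf k a : ℝ) else 1) := fun k a =>
    facet_normal_at hn V w hwinj hrange haff P hPV hrefl k (σf k) (hσk k) (hσinj k)
      (hσsurj k) (df k) (hdet k) (gf k) (hgpos k) (hedge k) a
  choose νf hνdef hνprim hνval using hfacet
  -- the linearly independent difference vectors from the vertex w 0
  set τ : Fin n → Fin (n+1) := σf 0 with hτdef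
  set cvec : Fin n → (Fin n → ℝ) := fun j => w (τ j) - w 0 with hcvec
  have hcindep : LinearIndependent ℝ cvec := by
    have h1 := (affineIndependent_iff_linearIndependent_vsub ℝ w 0).mp haff
    set τ' : Fin n → {x : Fin (n+1) // x ≠ 0} := fun i => ⟨τ i, hσk 0 i⟩ with hτ'
    have hτ'inj : Function.Injective τ' := fun a b hab =>
      hσinj 0 (congrArg Subtype.val hab)
    have h2 := h1.comp τ' hτ'inj
    have h3 : cvec = (fun (i : {x : Fin (n+1) // x ≠ 0}) => w ↑i -ᵥ w 0) ∘ τ' := by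
      funext i
      show w (τ i) - w 0 = w (τ' i) -ᵥ w 0
      rw [vsub_eq_sub]
    rw [h3]
    exact h2
  -- an integer vector orthogonal to all the cvec's is zero
  have hzero_of_basis : ∀ Z : Fin n → ℤ, (∀ j, dotZ Z (cvec j) = 0) → Z = 0 := by
    intro Z hZ
    have hcard' : Fintype.card (Fin n) = Module.finrank ℝ (Fin n → ℝ) := by
      rw [Fintype.card_fin, Module.finrank_pi, Fintype.card_fin]
    set B := basisOfLinearIndependentOfCardEqFinrank hcindep hcard' with hB
    have hL : (IsLinearMap.mk' _ (dotR_isLinear (fun m => (Z m : ℝ))))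
        = (0 : (Fin n → ℝ) →ₗ[ℝ] ℝ) := by
      apply B.ext
      intro j
      have hBj : B j = cvec j :=
        congrFun (coe_basisOfLinearIndependentOfCardEqFinrank hcindep hcard') j
      rw [hBj]
      show dotR (fun m => (Z m : ℝ)) (cvec j) = 0
      exact hZ j
    funext m
    have h2 : dotR (fun m => (Z m : ℝ)) (fun i => if i = m then (1:ℝ) else 0) = 0 := by
      have h3 := LinearMap.congr_fun hL (fun i => if i = m then (1:ℝ) else 0)
      simpa using h3
    have h3 : (Z m : ℝ) = 0 := by
      rw [← dotZ_single Z m]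
      exact h2
    have h4 : Z m = 0 := by exact_mod_cast h3
    simpa using h4
  -- normals of the big facet (opposite w 0), seen from the other vertices
  have hqdata : ∀ k : Fin (n+1), k ≠ 0 →
      ∃ (q : Fin n → ℤ) (t : ℤ), 0 < t ∧ IsPrimitiveZ q ∧
      (∀ j, j ≠ (0 : Fin (n+1)) → dotZ q (w j) = 1) ∧ dotZ q (w 0) = 1 - (t : ℝ) ∧
      (∃ a₀, σf k a₀ = 0 ∧ t = gf k a₀) := by
    intro k hk
    obtain ⟨a₀, ha₀⟩ := hσsurj k 0 (Ne.symm hk)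
    refine ⟨νf k a₀, gf k a₀, hgpos k a₀, hνprim k a₀, ?_, ?_, a₀, ha₀, rfl⟩
    · intro j hj
      have h1 := hνval k a₀ j
      rw [ha₀] at h1
      rw [h1, if_neg hj]
    · have h1 := hνval k a₀ 0
      rw [ha₀, if_pos rfl] at h1
      exact h1
  choose qv tv htv hqprim hqj hq0 hqa using hqdata
  -- q's pair with the cvec basis
  have hqc : ∀ k (hk : k ≠ (0 : Fin (n+1))) (j : Fin n),
      dotZ (qv k hk) (cvec j) = (tv k hk : ℝ) := by
    intro k hk j
    rw [hcvec]
    show dotZ (qv k hk) (w (τ j) - w 0) = _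
    rw [dotZ_subvec, hqj k hk (τ j) (hσk 0 j), hq0 k hk]
    ring
  -- all the tv's and qv's coincide
  have hteq : ∀ k (hk : k ≠ (0:Fin (n+1))) k' (hk' : k' ≠ (0:Fin (n+1))),
      tv k hk = tv k' hk' ∧ qv k hk = qv k' hk' := by
    intro k hk k' hk'
    set Z : Fin n → ℤ := fun m => tv k' hk' * qv k hk m - tv k hk * qv k' hk' m with hZdef
    have hZ0 : Z = 0 := by
      apply hzero_of_basis
      intro j
      show dotZ (fun m => tv k' hk' * qv k hk m - tv k hk * qv k' hk' m) (cvec j) = 0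
      rw [dotZ_subZ (fun m => tv k' hk' * qv k hk m) (fun m => tv k hk * qv k' hk' m),
        dotZ_mulvec, dotZ_mulvec, hqc k hk j, hqc k' hk' j]
      ring
    have hZm : ∀ m, tv k' hk' * qv k hk m = tv k hk * qv k' hk' m := by
      intro m
      have h1 : Z m = 0 := by rw [hZ0]; rfl
      rw [hZdef] at h1
      simpa [sub_eq_zero] using h1
    have hfun : (fun m => tv k' hk' * qv k hk m) = (fun m => tv k hk * qv k' hk' m) :=
      funext hZm
    have hg1 : gcdZ (fun m => tv k' hk' * qv k hk m) = tv k' hk' := by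
      rw [gcdZ_smul _ _ (htv k' hk').le, show gcdZ (qv k hk) = 1 from hqprim k hk, mul_one]
    have hg2 : gcdZ (fun m => tv k hk * qv k' hk' m) = tv k hk := by
      rw [gcdZ_smul _ _ (htv k hk).le, show gcdZ (qv k' hk') = 1 from hqprim k' hk', mul_one]
    have hteq1 : tv k hk = tv k' hk' := by
      rw [← hg2, ← hfun, hg1]
    refine ⟨hteq1, ?_⟩
    funext m
    have h2 := hZm m
    rw [hteq1] at h2
    exact mul_left_cancel₀ (ne_of_gt (htv k' hk')) h2
  -- the common normal and lattice length
  set i₀ : Fin n := ⟨0, hn⟩ with hi₀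
  set k₁ : Fin (n+1) := τ i₀ with hk₁def
  have hk₁0 : k₁ ≠ 0 := hσk 0 i₀
  set u₀ : Fin n → ℤ := qv k₁ hk₁0 with hu₀
  set T : ℤ := tv k₁ hk₁0 with hT
  -- each edge at w 0 has lattice length T
  have hglink : ∀ j : Fin n, gf 0 j = T := by
    intro j
    have hτj0 : τ j ≠ 0 := hσk 0 j
    obtain ⟨a₀, ha₀, hta₀⟩ := hqa (τ j) hτj0
    -- gf 0 j * df 0 j m = -(tv (τ j) * df (τ j) a₀ m)
    have hpt : ∀ m, gf 0 j * df 0 j m = -(tv (τ j) hτj0 * df (τ j) a₀ m) := by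
      intro m
      have h1 := hgd 0 j m
      have h2 := hgd (τ j) a₀ m
      rw [ha₀] at h2
      rw [hta₀]
      linarith [h1, h2]
    have hfun2 : (fun m => gf 0 j * df 0 j m)
        = (fun m => -(tv (τ j) hτj0 * df (τ j) a₀ m)) := funext hpt
    have hg1 : gcdZ (fun m => gf 0 j * df 0 j m) = gf 0 j := by
      rw [gcdZ_smul _ _ (hgpos 0 j).le, show gcdZ (df 0 j) = 1 from hdprim 0 j, mul_one]
    have hg2 : gcdZ (fun m => -(tv (τ j) hτj0 * df (τ j) a₀ m)) = tv (τ j) hτj0 := by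
      rw [gcdZ_neg (fun m => tv (τ j) hτj0 * df (τ j) a₀ m),
        gcdZ_smul _ _ (htv (τ j) hτj0).le,
        show gcdZ (df (τ j) a₀) = 1 from hdprim (τ j) a₀, mul_one]
    have : gf 0 j = tv (τ j) hτj0 := by rw [← hg1, hfun2, hg2]
    rw [this, hT]
    exact (hteq (τ j) hτj0 k₁ hk₁0).1
  -- dot products of the facet normals at w 0 with the basis
  have hνc : ∀ a j, dotZ (νf 0 a) (cvec j) = if a = j then -(gf 0 a : ℝ) else 0 := by
    intro a j
    rw [hcvec]
    show dotZ (νf 0 a) (w (τ j) - w 0) = _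
    rw [dotZ_subvec, hνval 0 a (τ j), hνval 0 a 0]
    rw [if_neg (Ne.symm (hσk 0 a))]
    by_cases haj : a = j
    · subst haj
      rw [if_pos rfl, if_pos rfl]
      ring
    · rw [if_neg (fun h => haj (hσinj 0 h).symm), if_neg haj]
      ring
  -- the sum of all facet normals is zero
  set Zs : Fin n → ℤ := fun m => u₀ m + ∑ a, νf 0 a m with hZs
  have hZssum : ∀ x : Fin n → ℝ, dotZ Zs x = dotZ u₀ x + ∑ a, dotZ (νf 0 a) x := by
    intro x
    have h1 : Zs = u₀ + ∑ a, νf 0 a := by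
      funext m
      simp [hZs, Finset.sum_apply]
    rw [h1, dotZ_add, dotZ_sum]
  have hZs0 : Zs = 0 := by
    apply hzero_of_basis
    intro j
    rw [hZssum, hqc k₁ hk₁0 j]
    rw [Finset.sum_congr rfl (fun a _ => hνc a j)]
    rw [Finset.sum_ite_eq' Finset.univ j (fun a => -(gf 0 a : ℝ))]
    rw [if_pos (Finset.mem_univ j), hglink j, hT]
    ring
  -- evaluate at w 0 : 0 = (1 - T) + n
  have hTeval : (0 : ℝ) = (1 - (T : ℝ)) + n := by
    have h1 : dotZ Zs (w 0) = 0 := by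
      rw [hZs0]
      simp [dotZ]
    rw [hZssum] at h1
    have h2 : dotZ u₀ (w 0) = 1 - (T : ℝ) := hq0 k₁ hk₁0
    have h3 : ∀ a, dotZ (νf 0 a) (w 0) = 1 := by
      intro a
      rw [hνval 0 a 0, if_neg (Ne.symm (hσk 0 a))]
    rw [h2, Finset.sum_congr rfl (fun a _ => h3 a)] at h1
    simpa using h1.symm
  have hTreal : (T : ℝ) = n + 1 := by linarith
  -- the unimodular matrix
  set A : Matrix (Fin n) (Fin n) ℤ := ((Matrix.of (df 0))⁻¹).transpose with hA
  have hAdet : IsUnit A.det := by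
    rw [hA, Matrix.det_transpose]
    have h1 : (Matrix.of (df 0)).det * (Matrix.of (df 0))⁻¹.det = 1 := by
      rw [← Matrix.det_mul, Matrix.mul_nonsing_inv _ (hdet 0), Matrix.det_one]
    exact IsUnit.of_mul_eq_one _ (by rw [mul_comm] at h1; exact h1)
  refine ⟨A, hAdet, ?_⟩
  have hAν : ∀ a m, (A a m : ℝ) = -((νf 0 a m : ℤ) : ℝ) := by
    intro a m
    have h1 := hνdef 0 a m
    have h2 : A a m = -(νf 0 a m) := by
      rw [h1, hA, Matrix.transpose_apply, neg_neg]
    rw [h2]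
    push_cast
    ring
  -- the linear map
  set L : (Fin n → ℝ) →ₗ[ℝ] (Fin n → ℝ) :=
    { toFun := fun x => fun i => ∑ j, (A i j : ℝ) * x j
      map_add' := by
        intro x y
        funext i
        simp [mul_add, Finset.sum_add_distrib]
      map_smul' := by
        intro c x
        funext i
        simp [Finset.mul_sum, mul_left_comm] } with hL
  have hLfun : (fun x : Fin n → ℝ => fun i => ∑ j, (A i j : ℝ) * x j) = ⇑L := rfl
  have hLval : ∀ j a, L (w j) a = if j = τ a then (n : ℝ) else -1 := by
    intro j a
    show ∑ m, (A a m : ℝ) * w j m = _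
    have h1 : ∑ m, (A a m : ℝ) * w j m = -dotZ (νf 0 a) (w j) := by
      rw [dotZ, ← Finset.sum_neg_distrib]
      refine Finset.sum_congr rfl fun m _ => ?_
      rw [hAν a m]
      ring
    rw [h1, hνval 0 a j]
    split
    · rw [hglink a, hTreal]
      ring
    · norm_num
  -- image of the vertex set
  have himg : (⇑L) '' (V : Set (Fin n → ℝ)) = Set.range (msVert n) := by
    rw [← hrange, ← Set.range_comp]
    apply Set.eq_of_subset_of_subset
    · rintro y ⟨j, rfl⟩
      rcases eq_or_ne j 0 with rfl | hj
      · refine ⟨0, ?_⟩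
        funext a
        rw [msVert_zero]
        have hv : L (w 0) a = -1 := by
          rw [hLval 0 a, if_neg (Ne.symm (hσk 0 a))]
        first
          | exact hv
          | exact hv.symm
      · obtain ⟨b, rfl⟩ := hσsurj 0 j hj
        refine ⟨b.succ, ?_⟩
        funext a
        rw [msVert_succ]
        have hv : L (w (τ b)) a = if b = a then (n : ℝ) else -1 := by
          rw [hLval (τ b) a]
          by_cases hba : b = a
          · subst hba
            rw [if_pos rfl, if_pos rfl]
          · rw [if_neg (fun h => hba (hσinj 0 h)), if_neg hba]
        first
          | exact hv
          | exact hv.symm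
    · rintro y ⟨kk, rfl⟩
      refine Fin.cases ?_ ?_ kk
      · refine ⟨0, ?_⟩
        funext a
        rw [msVert_zero]
        have hv : L (w 0) a = -1 := by
          rw [hLval 0 a, if_neg (Ne.symm (hσk 0 a))]
        first
          | exact hv
          | exact hv.symm
      · intro b
        refine ⟨τ b, ?_⟩
        funext a
        rw [msVert_succ]
        have hv : L (w (τ b)) a = if b = a then (n : ℝ) else -1 := by
          rw [hLval (τ b) a]
          by_cases hba : b = a
          · subst hba
            rw [if_pos rfl, if_pos rfl]
          · rw [if_neg (fun h => hba (hσinj 0 h)), if_neg hba]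
        first
          | exact hv
          | exact hv.symm
  calc (fun x : Fin n → ℝ => fun i => ∑ j, (A i j : ℝ) * x j) '' P
      = ⇑L '' (convexHull ℝ (V : Set (Fin n → ℝ))) := by rw [hLfun, hPV]
    _ = convexHull ℝ (⇑L '' (V : Set (Fin n → ℝ))) := L.image_convexHull _
    _ = convexHull ℝ (Set.range (msVert n)) := by rw [himg]
    _ = monotoneSimplex n := hull_msVert n
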